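/- Let p ≥ 5 and f ≥ 2. The set RD(x) of f-tuples λ = (λ_0(x_0),...,λ_{f-1}(x_{f-1})) satisfying: (i) λ_i(x_i) ∈ {x_i, x_i+1, p-2-x_i, p-3-x_i} for all i; (ii) if λ_i(x_i) ∈ {x_i, x_i+1} then λ_{i+1}(x_{i+1}) ∈ {x_{i+1}, p-2-x_{i+1}}; (iii) if λ_i(x_i) ∈ {p-2-x_i, p-3-x_i} then λ_{i+1}(x_{i+1}) ∈ {p-3-x_{i+1}, x_{i+1}+1}; (with cyclic conventions x_f = x_0, λ_f = λ_0) is in bijection with the power set of {0,...,f-1} via λ ↦ S_λ := {i : λ_i(x_i) ∈ {p-3-x_i, x_i+1}}. In particular |RD(x)| = 2^f. -/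
import Mathlib


/-- Encode an affine function `a·x + b` as `(a, b) : ℤ × ℤ`; the four possibilities
`x_i, x_i+1, p-2-x_i, p-3-x_i` are `(1,0), (1,1), (-1,p-2), (-1,p-3)`.
`RDTuple p l` says `l ∈ RD(x_0,…,x_{f-1})` (cyclic conventions, `i+1` in `Fin f`). -/
def RDTuple (p : ℤ) {f : ℕ} [NeZero f] (l : Fin f → ℤ × ℤ) : Prop :=
  (∀ i : Fin f, l i = (1, 0) ∨ l i = (1, 1) ∨ l i = (-1, p - 2) ∨ l i = (-1, p - 3)) ∧
  (∀ i : Fin f, (l i = (1, 0) ∨ l i = (1, 1)) →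
      (l (i + 1) = (1, 0) ∨ l (i + 1) = (-1, p - 2))) ∧
  (∀ i : Fin f, (l i = (-1, p - 2) ∨ l i = (-1, p - 3)) →
      (l (i + 1) = (-1, p - 3) ∨ l (i + 1) = (1, 1)))

/-- `S_λ = {i : λ_i(x_i) ∈ {p-3-x_i, x_i+1}}`. -/
def SLambda (p : ℤ) {f : ℕ} (l : Fin f → ℤ × ℤ) : Set (Fin f) :=
  {i | l i = (-1, p - 3) ∨ l i = (1, 1)}

open Classical in
noncomputable def RDinv (p : ℤ) {f : ℕ} [NeZero f] (S : Set (Fin f)) : Fin f → ℤ × ℤ :=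
  fun i => if i ∈ S then (if i + 1 ∈ S then (-1, p - 3) else (1, 1))
           else (if i + 1 ∈ S then (-1, p - 2) else (1, 0))

lemma RDinv_mem (p : ℤ) {f : ℕ} [NeZero f] (hp : 5 ≤ p) (S : Set (Fin f)) :
    RDTuple p (RDinv p S) := by
  classical
  refine ⟨fun i => ?_, fun i h => ?_, fun i h => ?_⟩ <;>
    simp only [RDinv] at * <;>
    split_ifs at * <;>
    simp_all [Prod.ext_iff] <;> omega

lemma SLambda_RDinv (p : ℤ) {f : ℕ} [NeZero f] (hp : 5 ≤ p) (S : Set (Fin f)) :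
    SLambda p (RDinv p S) = S := by
  classical
  ext i
  simp only [SLambda, RDinv, Set.mem_setOf_eq]
  split_ifs <;> simp_all [Prod.ext_iff] <;> omega

lemma RDinv_SLambda (p : ℤ) {f : ℕ} [NeZero f] (hp : 5 ≤ p) (l : Fin f → ℤ × ℤ)
    (h : RDTuple p l) : RDinv p (SLambda p l) = l := by
  classical
  obtain ⟨h1, h2, h3⟩ := h
  have hp23 : p - 2 ≠ p - 3 := by omega
  have hp32 : p - 3 ≠ p - 2 := by omega
  have mem_iff : ∀ j : Fin f, j ∈ SLambda p l ↔ (l j = (-1, p - 3) ∨ l j = (1, 1)) := by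
    intro j; rfl
  have not_mem10 : ∀ j : Fin f, l j = (1, 0) → j ∉ SLambda p l := by
    intro j hj hm
    rcases (mem_iff j).1 hm with h' | h' <;> rw [hj] at h' <;>
      simp [Prod.ext_iff] at h'
  have not_mem2 : ∀ j : Fin f, l j = (-1, p - 2) → j ∉ SLambda p l := by
    intro j hj hm
    rcases (mem_iff j).1 hm with h' | h' <;> rw [hj] at h' <;>
      simp [Prod.ext_iff, hp23] at h'
  have mem11 : ∀ j : Fin f, l j = (1, 1) → j ∈ SLambda p l := by
    intro j hj; exact (mem_iff j).2 (Or.inr hj)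
  have mem3 : ∀ j : Fin f, l j = (-1, p - 3) → j ∈ SLambda p l := by
    intro j hj; exact (mem_iff j).2 (Or.inl hj)
  funext i
  rcases h1 i with h0 | h0 | h0 | h0
  · have hi : i ∉ SLambda p l := not_mem10 i h0
    have hi1 : i + 1 ∉ SLambda p l := by
      rcases h2 i (Or.inl h0) with h' | h'
      · exact not_mem10 _ h'
      · exact not_mem2 _ h'
    simp [RDinv, hi, hi1, h0]
  · have hi : i ∈ SLambda p l := mem11 i h0
    have hi1 : i + 1 ∉ SLambda p l := by
      rcases h2 i (Or.inr h0) with h' | h'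
      · exact not_mem10 _ h'
      · exact not_mem2 _ h'
    simp [RDinv, hi, hi1, h0]
  · have hi : i ∉ SLambda p l := not_mem2 i h0
    have hi1 : i + 1 ∈ SLambda p l := by
      rcases h3 i (Or.inl h0) with h' | h'
      · exact mem3 _ h'
      · exact mem11 _ h'
    simp [RDinv, hi, hi1, h0]
  · have hi : i ∈ SLambda p l := mem3 i h0
    have hi1 : i + 1 ∈ SLambda p l := by
      rcases h3 i (Or.inr h0) with h' | h'
      · exact mem3 _ h'
      · exact mem11 _ h'
    simp [RDinv, hi, hi1, h0]

/-- For `p ≥ 5`, `f ≥ 2`: the map `λ ↦ S_λ` is a bijection from `RD(x)` onto the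
power set of `{0,…,f-1}`; in particular `|RD(x)| = 2^f`. -/
theorem stmt12 (p : ℤ) (f : ℕ) [NeZero f] (hp : 5 ≤ p) (hf : 2 ≤ f) :
    Function.Bijective
      (fun l : {l : Fin f → ℤ × ℤ // RDTuple p l} => SLambda p l.1) ∧
    Nat.card {l : Fin f → ℤ × ℤ // RDTuple p l} = 2 ^ f := by
  classical
  have hbij : Function.Bijective
      (fun l : {l : Fin f → ℤ × ℤ // RDTuple p l} => SLambda p l.1) := by
    rw [Function.bijective_iff_has_inverse]
    refine ⟨fun S => ⟨RDinv p S, RDinv_mem p hp S⟩, fun l => ?_, fun S => ?_⟩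
    · exact Subtype.ext (RDinv_SLambda p hp l.1 l.2)
    · exact SLambda_RDinv p hp S
  refine ⟨hbij, ?_⟩
  rw [Nat.card_eq_of_bijective _ hbij]
  simp [Nat.card_eq_fintype_card]
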